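/- Let T be a finite tree, let k be a positive integer, let S be a k-truncated resolving set of T, and let r be a vertex with d(r,z) > k for all z ∈ S. Then for every connected component C of the forest obtained by deleting r from T: (i) every vertex x ∈ C satisfies d(x,z) ≤ k for some z ∈ S ∩ C, and (ii) for every pair of distinct vertices x, y ∈ C there is a vertex z ∈ S ∩ C with d_k(x,z) ≠ d_k(y,z). In other words, S ∩ C is a k-truncated dominating resolving set of the subtree induced on C (where distances within C agree with distances in T). -/
import Mathlib


/-- The `k`-truncated distance: `min (d u v) (k+1)`. -/
noncomputable def truncDist {V : Type*} (G : SimpleGraph V) (k : ℕ) (u v : V) : ℕ :=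
  min (G.dist u v) (k + 1)

/-- `S` is a `k`-truncated resolving set of `G`. -/
def IsTruncResolvingSet {V : Type*} (G : SimpleGraph V) (k : ℕ) (S : Set V) : Prop :=
  ∀ u v : V, u ≠ v → ∃ w ∈ S, truncDist G k u w ≠ truncDist G k v w

lemma walk_in_induce {V : Type*} {G : SimpleGraph V} {s : Set V} {x z : V}
    (p : G.Walk x z) (hp : ∀ w ∈ p.support, w ∈ s) (hx : x ∈ s) (hz : z ∈ s) :
    (G.induce s).Reachable ⟨x, hx⟩ ⟨z, hz⟩ := by
  induction p with
  | nil => exact SimpleGraph.Reachable.refl _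
  | @cons a b c h p ih =>
    have hb : b ∈ s := hp b (by simp)
    refine SimpleGraph.Reachable.trans ?_ (ih (fun w hw => hp w (by simp [hw])) hb hz)
    exact SimpleGraph.Adj.reachable (by simpa using h)

lemma reach_of_close {V : Type*} {G : SimpleGraph V} {k : ℕ} {r x z : V}
    (hxz : G.Reachable x z) (hd : G.dist x z ≤ k) (hrz : k < G.dist r z) :
    ∃ (hx : x ∈ ({r}ᶜ : Set V)) (hz : z ∈ ({r}ᶜ : Set V)),
      (G.induce ({r}ᶜ : Set V)).Reachable ⟨x, hx⟩ ⟨z, hz⟩ := by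
  classical
  obtain ⟨p, hp⟩ := hxz.exists_walk_length_eq_dist
  have hrp : r ∉ p.support := by
    intro hmem
    have h1 : G.dist r z ≤ (p.dropUntil r hmem).length := SimpleGraph.dist_le _
    have h2 : (p.dropUntil r hmem).length ≤ p.length :=
      SimpleGraph.Walk.length_dropUntil_le p hmem
    omega
  have hsup : ∀ w ∈ p.support, w ∈ ({r}ᶜ : Set V) := by
    intro w hw
    simp only [Set.mem_compl_iff, Set.mem_singleton_iff]
    rintro rfl; exact hrp hw
  exact ⟨hsup x p.start_mem_support, hsup z p.end_mem_support,
    walk_in_induce p hsup _ _⟩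

/-- If `S` is a `k`-truncated resolving set of a tree `T` and `r` is a vertex that is
`k`-far from every element of `S`, then within each connected component `C` of the
forest obtained by deleting `r`, the set `S ∩ C` `k`-dominates and `k`-resolves `C`. -/
theorem restriction_to_components_isDomResolving {V : Type*} [Fintype V] (G : SimpleGraph V)
    (hT : G.IsTree) (k : ℕ) (hk : 0 < k) (S : Set V)
    (hS : IsTruncResolvingSet G k S) (r : V) (hr : ∀ z ∈ S, k < G.dist r z) :
    (∀ x : ({r}ᶜ : Set V), ∃ z : ({r}ᶜ : Set V), (z : V) ∈ S ∧
      (G.induce ({r}ᶜ : Set V)).Reachable x z ∧ G.dist (x : V) (z : V) ≤ k) ∧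
    (∀ x y : ({r}ᶜ : Set V), (G.induce ({r}ᶜ : Set V)).Reachable x y → x ≠ y →
      ∃ z : ({r}ᶜ : Set V), (z : V) ∈ S ∧ (G.induce ({r}ᶜ : Set V)).Reachable x z ∧
        truncDist G k (x : V) (z : V) ≠ truncDist G k (y : V) (z : V)) := by
  have hconn : G.Preconnected := hT.isConnected.preconnected
  constructor
  · intro x
    have hxr : (x : V) ≠ r := x.2
    obtain ⟨w, hwS, hne⟩ := hS (x : V) r hxr
    have hrw : k < G.dist r w := hr w hwS
    have hdx : G.dist (x : V) w ≤ k := by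
      unfold truncDist at hne; omega
    obtain ⟨hx', hw', hreach⟩ := reach_of_close (hconn (x : V) w) hdx hrw
    exact ⟨⟨w, hw'⟩, hwS, by
      have : x = (⟨(x : V), hx'⟩ : ({r}ᶜ : Set V)) := Subtype.ext rfl
      rw [this]; exact hreach, hdx⟩
  · intro x y hxy hne
    have hxyv : (x : V) ≠ (y : V) := fun h => hne (Subtype.ext h)
    obtain ⟨w, hwS, hnew⟩ := hS (x : V) (y : V) hxyv
    have hrw : k < G.dist r w := hr w hwS
    by_cases h1 : G.dist (x : V) w ≤ k
    · obtain ⟨hx', hw', hreach⟩ := reach_of_close (hconn (x : V) w) h1 hrw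
      exact ⟨⟨w, hw'⟩, hwS, by
        have : x = (⟨(x : V), hx'⟩ : ({r}ᶜ : Set V)) := Subtype.ext rfl
        rw [this]; exact hreach, hnew⟩
    · have h2 : G.dist (y : V) w ≤ k := by
        unfold truncDist at hnew; omega
      obtain ⟨hy', hw', hreach⟩ := reach_of_close (hconn (y : V) w) h2 hrw
      refine ⟨⟨w, hw'⟩, hwS, ?_, hnew⟩
      refine hxy.trans ?_
      have : y = (⟨(y : V), hy'⟩ : ({r}ᶜ : Set V)) := Subtype.ext rfl
      rw [this]; exact hreach
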